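/- Let T > 0 and let 𝒫 be a nonempty family of Borel probability measures on the path space C([0,T]; ℝ^d) with the supremum norm. Let g : C([0,T]; ℝ^d) → ℝ be bounded and admit a concave, nondecreasing modulus of continuity ρ with ρ(0)=0, i.e. |g(ω) − g(ω')| ≤ ρ(‖ω − ω'‖_∞). Let 0 = t_0 < ⋯ < t_n = T be a partition of mesh at most ε, and for ω ∈ C([0,T]; ℝ^d) let Γ^ε(ω) denote the piecewise linear interpolation of the points (t_i, ω(t_i)). Assume the random variable ω ↦ w_ω(ε) := sup{‖ω(s) − ω(t)‖ : s,t ∈ [0,T], |s−t| ≤ ε} satisfies sup_{P ∈ 𝒫} ∫ w_ω(ε) dP(ω) < ∞. Then | sup_{P ∈ 𝒫} ∫ g(Γ^ε(ω)) dP(ω) − sup_{P ∈ 𝒫} ∫ g(ω) dP(ω) | ≤ ρ( sup_{P ∈ 𝒫} ∫ w_ω(ε) dP(ω) ). -/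

import Mathlib

open MeasureTheory Filter

private lemma sup_comparison {ι : Type*} [Nonempty ι] (F G : ι → ℝ) (c B : ℝ)
    (hFB : ∀ i, F i ≤ B) (hGB : ∀ i, G i ≤ B)
    (h : ∀ i, |F i - G i| ≤ c) : |(⨆ i, F i) - ⨆ i, G i| ≤ c := by
  have hGbdd : BddAbove (Set.range G) := ⟨B, by rintro _ ⟨i, rfl⟩; exact hGB i⟩
  have hFbdd : BddAbove (Set.range F) := ⟨B, by rintro _ ⟨i, rfl⟩; exact hFB i⟩
  rw [abs_sub_le_iff]
  constructor
  · rw [sub_le_iff_le_add]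
    refine ciSup_le fun i => ?_
    have h1 := (abs_sub_le_iff.1 (h i)).1
    have h2 : G i ≤ ⨆ i, G i := le_ciSup hGbdd i
    linarith
  · rw [sub_le_iff_le_add]
    refine ciSup_le fun i => ?_
    have h1 := (abs_sub_le_iff.1 (h i)).2
    have h2 : F i ≤ ⨆ i, F i := le_ciSup hFbdd i
    linarith

/-- Quantitative form of Lemma 3.1: replacing a path-dependent payoff `g` by its
value on the piecewise linear interpolation along a partition of mesh `ε` changes
the sublinear expectation by at most `ρ` of the worst-case expected modulus of
continuity at scale `ε`. -/
theorem interpolation_payoff_value_estimate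
    {d : ℕ} (T ε : ℝ) (hT : 0 < T) (hε : 0 < ε)
    [MeasurableSpace C(Set.Icc (0:ℝ) T, EuclideanSpace ℝ (Fin d))]
    [BorelSpace C(Set.Icc (0:ℝ) T, EuclideanSpace ℝ (Fin d))]
    (PP : Set (Measure C(Set.Icc (0:ℝ) T, EuclideanSpace ℝ (Fin d)))) (hPP : PP.Nonempty)
    (hprob : ∀ P ∈ PP, IsProbabilityMeasure P)
    (g : C(Set.Icc (0:ℝ) T, EuclideanSpace ℝ (Fin d)) → ℝ)
    (Cg : ℝ) (hgb : ∀ ω, |g ω| ≤ Cg)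
    (ρ : ℝ → ℝ) (hρc : ConcaveOn ℝ (Set.Ici 0) ρ) (hρm : MonotoneOn ρ (Set.Ici 0))
    (hρ0 : ρ 0 = 0) (hρlim : Tendsto ρ (nhdsWithin 0 (Set.Ioi 0)) (nhds 0))
    (hmod : ∀ ω ω', |g ω - g ω'| ≤ ρ ‖ω - ω'‖)
    (n : ℕ) (hn : 0 < n) (t : Fin (n + 1) → Set.Icc (0:ℝ) T) (htm : StrictMono t)
    (ht0 : (t 0 : ℝ) = 0) (htn : (t (Fin.last n) : ℝ) = T)
    (hmesh : ∀ i : Fin n, (t i.succ : ℝ) - (t i.castSucc : ℝ) ≤ ε)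
    (Γ : C(Set.Icc (0:ℝ) T, EuclideanSpace ℝ (Fin d)) →
      C(Set.Icc (0:ℝ) T, EuclideanSpace ℝ (Fin d)))
    (hΓ : ∀ ω, ∀ i : Fin n, ∀ s : Set.Icc (0:ℝ) T,
      (t i.castSucc : ℝ) ≤ s → (s : ℝ) ≤ t i.succ →
      Γ ω s = ω (t i.castSucc) +
        (((s : ℝ) - t i.castSucc) / ((t i.succ : ℝ) - t i.castSucc)) •
          (ω (t i.succ) - ω (t i.castSucc)))
    (W : C(Set.Icc (0:ℝ) T, EuclideanSpace ℝ (Fin d)) → ℝ)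
    (hW : ∀ ω, W ω = sSup {r : ℝ | ∃ s u : Set.Icc (0:ℝ) T,
      |(s : ℝ) - (u : ℝ)| ≤ ε ∧ r = ‖ω s - ω u‖})
    (hWint : ∀ P ∈ PP, Integrable W P)
    (hWbdd : BddAbove ((fun P => ∫ ω, W ω ∂P) '' PP)) :
    |(⨆ P ∈ PP, ∫ ω, g (Γ ω) ∂P) - ⨆ P ∈ PP, ∫ ω, g ω ∂P|
      ≤ ρ (⨆ P ∈ PP, ∫ ω, W ω ∂P) := by
  classical
  -- continuity of ρ on [0, ∞)
  have hρcont : ContinuousOn ρ (Set.Ici 0) := by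
    intro x hx
    rcases eq_or_lt_of_le (Set.mem_Ici.1 hx : (0:ℝ) ≤ x) with h | h
    · subst h
      have h1 : ContinuousWithinAt ρ (Set.Ioi 0) 0 := by
        unfold ContinuousWithinAt
        rw [hρ0]
        exact hρlim
      have h2 := h1.insert
      rwa [Set.Ioi_insert] at h2
    · have h2 := hρc.continuousOn_interior
      rw [interior_Ici] at h2
      exact ((h2 x h).continuousAt (Ioi_mem_nhds h)).continuousWithinAt
  -- covering the time interval by partition subintervals
  have hcover : ∀ s : Set.Icc (0:ℝ) T,
      ∃ i : Fin n, (t i.castSucc : ℝ) ≤ s ∧ (s : ℝ) ≤ t i.succ := by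
    intro s
    have h0s : (t 0 : ℝ) ≤ s := by rw [ht0]; exact s.2.1
    set S : Finset (Fin (n+1)) := Finset.univ.filter (fun j => (t j : ℝ) ≤ s) with hS
    have hS0 : (0 : Fin (n+1)) ∈ S := by
      simp only [hS, Finset.mem_filter, Finset.mem_univ, true_and]
      exact h0s
    have hSne : S.Nonempty := ⟨0, hS0⟩
    set j := S.max' hSne with hj
    have hjS : j ∈ S := S.max'_mem hSne
    have hjle : (t j : ℝ) ≤ s := by
      have := hjS
      simp only [hS, Finset.mem_filter, Finset.mem_univ, true_and] at this
      exact this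
    have htop : ∀ k : Fin (n+1), (t k : ℝ) ≤ T := fun k =>
      calc (t k : ℝ) ≤ (t (Fin.last n) : ℝ) := Subtype.coe_le_coe.2 (htm.monotone (Fin.le_last k))
        _ = T := htn
    by_cases hlast : j = Fin.last n
    · have hsT : (s:ℝ) = T := by
        refine le_antisymm s.2.2 ?_
        calc T = (t (Fin.last n) : ℝ) := htn.symm
          _ = (t j : ℝ) := by rw [hlast]
          _ ≤ s := hjle
      refine ⟨⟨n-1, by omega⟩, ?_, ?_⟩
      · exact le_trans (htop _) (le_of_eq hsT.symm)
      · have hsucc : ((⟨n-1, by omega⟩ : Fin n)).succ = Fin.last n := by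
          ext
          simp only [Fin.val_succ, Fin.val_last]
          omega
        rw [hsucc, htn]
        exact s.2.2
    · have hjn : (j : ℕ) < n := by
        have := j.isLt
        have hne : (j : ℕ) ≠ n := fun h => hlast (Fin.ext (by simp [Fin.last, h]))
        omega
      set i : Fin n := ⟨j, hjn⟩ with hi
      have hcast : i.castSucc = j := by ext; simp [hi]
      refine ⟨i, by rw [hcast]; exact hjle, ?_⟩
      by_contra hcon
      push_neg at hcon
      have hmem : i.succ ∈ S := by
        simp only [hS, Finset.mem_filter, Finset.mem_univ, true_and]
        exact hcon.le
      have hle := S.le_max' _ hmem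
      rw [← hj, ← hcast] at hle
      exact absurd (lt_of_le_of_lt hle (Fin.castSucc_lt_succ (i := i))) (lt_irrefl _)
  -- convex-combination form of the interpolation
  have hconv : ∀ s : Set.Icc (0:ℝ) T, ∃ (μ ν : ℝ) (a b : Set.Icc (0:ℝ) T),
      0 ≤ μ ∧ 0 ≤ ν ∧ μ + ν = 1 ∧ |(a:ℝ) - s| ≤ ε ∧ |(b:ℝ) - s| ≤ ε ∧
      ∀ ω : C(Set.Icc (0:ℝ) T, EuclideanSpace ℝ (Fin d)), Γ ω s = μ • ω a + ν • ω b := by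
    intro s
    obtain ⟨i, h1, h2⟩ := hcover s
    have hab : (t i.castSucc : ℝ) < (t i.succ : ℝ) :=
      Subtype.coe_lt_coe.2 (htm (Fin.castSucc_lt_succ (i := i)))
    set lam := (((s:ℝ) - t i.castSucc) / ((t i.succ : ℝ) - t i.castSucc)) with hlam
    have hlam0 : 0 ≤ lam := div_nonneg (by linarith) (by linarith)
    have hlam1 : lam ≤ 1 := (div_le_one (by linarith)).2 (by linarith)
    have hms := hmesh i
    refine ⟨1 - lam, lam, t i.castSucc, t i.succ, by linarith, hlam0, by ring, ?_, ?_, ?_⟩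
    · rw [abs_le]; constructor <;> linarith
    · rw [abs_le]; constructor <;> linarith
    · intro ω
      rw [hΓ ω i s h1 h2, ← hlam]
      module
  -- the modulus of continuity dominates increments at scale ε
  have hWmem : ∀ (ω : C(Set.Icc (0:ℝ) T, EuclideanSpace ℝ (Fin d))) (s u : Set.Icc (0:ℝ) T), |(s:ℝ) - u| ≤ ε → ‖ω s - ω u‖ ≤ W ω := by
    intro ω s u h
    rw [hW ω]
    apply le_csSup
    · refine ⟨2 * ‖ω‖, ?_⟩
      rintro r ⟨s', u', -, rfl⟩
      calc ‖ω s' - ω u'‖ ≤ ‖ω s'‖ + ‖ω u'‖ := norm_sub_le _ _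
        _ ≤ ‖ω‖ + ‖ω‖ := add_le_add (ω.norm_coe_le_norm s') (ω.norm_coe_le_norm u')
        _ = 2 * ‖ω‖ := by ring
    · exact ⟨s, u, h, rfl⟩
  have hW0 : ∀ ω : C(Set.Icc (0:ℝ) T, EuclideanSpace ℝ (Fin d)), 0 ≤ W ω := by
    intro ω
    have z : Set.Icc (0:ℝ) T := ⟨0, le_refl 0, hT.le⟩
    have := hWmem ω z z (by simpa using hε.le)
    simpa using this
  -- the interpolation is within W ω of ω in sup norm
  have hΓW : ∀ ω : C(Set.Icc (0:ℝ) T, EuclideanSpace ℝ (Fin d)), ‖Γ ω - ω‖ ≤ W ω := by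
    intro ω
    rw [ContinuousMap.norm_le _ (hW0 ω)]
    intro s
    obtain ⟨μ, ν, a, b, hμ, hν, hμν, ha, hb, hf⟩ := hconv s
    have hν' : ν = 1 - μ := by linarith
    have heq : (Γ ω - ω) s = μ • (ω a - ω s) + ν • (ω b - ω s) := by
      rw [ContinuousMap.sub_apply, hf ω, hν']; module
    rw [heq]
    calc ‖μ • (ω a - ω s) + ν • (ω b - ω s)‖
        ≤ μ * ‖ω a - ω s‖ + ν * ‖ω b - ω s‖ := by
          refine (norm_add_le _ _).trans ?_
          rw [norm_smul, norm_smul, Real.norm_of_nonneg hμ, Real.norm_of_nonneg hν]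
      _ ≤ μ * W ω + ν * W ω :=
          add_le_add (mul_le_mul_of_nonneg_left (hWmem ω a s ha) hμ)
            (mul_le_mul_of_nonneg_left (hWmem ω b s hb) hν)
      _ = W ω := by rw [← add_mul, hμν, one_mul]
  -- Γ is 1-Lipschitz, hence continuous
  have hΓlip : ∀ ω ω' : C(Set.Icc (0:ℝ) T, EuclideanSpace ℝ (Fin d)), ‖Γ ω - Γ ω'‖ ≤ ‖ω - ω'‖ := by
    intro ω ω'
    rw [ContinuousMap.norm_le _ (norm_nonneg _)]
    intro s
    obtain ⟨μ, ν, a, b, hμ, hν, hμν, -, -, hf⟩ := hconv s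
    have hν' : ν = 1 - μ := by linarith
    have heq : (Γ ω - Γ ω') s = μ • (ω a - ω' a) + ν • (ω b - ω' b) := by
      rw [ContinuousMap.sub_apply, hf ω, hf ω', hν']; module
    have hea : ‖ω a - ω' a‖ ≤ ‖ω - ω'‖ := by
      rw [← ContinuousMap.sub_apply]; exact (ω - ω').norm_coe_le_norm a
    have heb : ‖ω b - ω' b‖ ≤ ‖ω - ω'‖ := by
      rw [← ContinuousMap.sub_apply]; exact (ω - ω').norm_coe_le_norm b
    rw [heq]
    calc ‖μ • (ω a - ω' a) + ν • (ω b - ω' b)‖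
        ≤ μ * ‖ω a - ω' a‖ + ν * ‖ω b - ω' b‖ := by
          refine (norm_add_le _ _).trans ?_
          rw [norm_smul, norm_smul, Real.norm_of_nonneg hμ, Real.norm_of_nonneg hν]
      _ ≤ μ * ‖ω - ω'‖ + ν * ‖ω - ω'‖ :=
          add_le_add (mul_le_mul_of_nonneg_left hea hμ) (mul_le_mul_of_nonneg_left heb hν)
      _ = ‖ω - ω'‖ := by rw [← add_mul, hμν, one_mul]
  have hΓcont : Continuous Γ := by
    have : LipschitzWith 1 Γ := LipschitzWith.of_dist_le_mul (fun ω ω' => by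
      rw [dist_eq_norm, dist_eq_norm]
      simpa using hΓlip ω ω')
    exact this.continuous
  -- g is continuous
  have hgcont : Continuous g := by
    rw [Metric.continuous_iff]
    intro ω η hη
    obtain ⟨δ, hδ, hδ'⟩ := Metric.tendsto_nhdsWithin_nhds.1 hρlim η hη
    refine ⟨δ, hδ, fun ω' hd => ?_⟩
    rcases eq_or_ne ω' ω with rfl | hne
    · simpa using hη
    · have hpos : 0 < ‖ω' - ω‖ := by
        rw [norm_pos_iff, sub_ne_zero]; exact hne
      have hdist : dist (‖ω' - ω‖) 0 < δ := by
        rw [Real.dist_eq, sub_zero, abs_of_pos hpos, ← dist_eq_norm]; exact hd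
      have hlt := hδ' (Set.mem_Ioi.2 hpos) hdist
      rw [Real.dist_eq, sub_zero] at hlt
      calc dist (g ω') (g ω) = |g ω' - g ω| := Real.dist_eq _ _
        _ ≤ ρ ‖ω' - ω‖ := hmod ω' ω
        _ ≤ |ρ ‖ω' - ω‖| := le_abs_self _
        _ < η := hlt
  -- the supremum of expected moduli
  set M := ⨆ P ∈ PP, ∫ ω, W ω ∂P with hM
  have hWbddR : BddAbove (Set.range fun P : Measure C(Set.Icc (0:ℝ) T, EuclideanSpace ℝ (Fin d)) => ⨆ _ : P ∈ PP, ∫ ω, W ω ∂P) := by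
    obtain ⟨bW, hbW⟩ := hWbdd
    refine ⟨max bW 0, ?_⟩
    rintro _ ⟨P, rfl⟩
    dsimp only
    by_cases hP : P ∈ PP
    · rw [ciSup_pos hP]
      exact le_max_of_le_left (hbW (Set.mem_image_of_mem _ hP))
    · haveI : IsEmpty (P ∈ PP) := ⟨hP⟩
      rw [Real.iSup_of_isEmpty]
      exact le_max_right _ _
  have hMle : ∀ P ∈ PP, ∫ ω, W ω ∂P ≤ M := by
    intro P hP
    have he : (⨆ _ : P ∈ PP, ∫ ω, W ω ∂P) = ∫ ω, W ω ∂P := ciSup_pos hP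
    calc ∫ ω, W ω ∂P = ⨆ _ : P ∈ PP, ∫ ω, W ω ∂P := he.symm
      _ ≤ ⨆ P, ⨆ _ : P ∈ PP, ∫ ω, W ω ∂P := le_ciSup hWbddR P
      _ = M := hM.symm
  have hM0 : 0 ≤ M := by
    obtain ⟨P₀, hP₀⟩ := hPP
    exact (integral_nonneg fun ω => hW0 ω).trans (hMle P₀ hP₀)
  have hρM0 : 0 ≤ ρ M := by
    rw [← hρ0]
    exact hρm (Set.mem_Ici.2 le_rfl) (Set.mem_Ici.2 hM0) hM0
  -- affine bound on ρ, for integrability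
  have hρε0 : 0 ≤ ρ ε := by
    rw [← hρ0]
    exact hρm (Set.mem_Ici.2 le_rfl) (Set.mem_Ici.2 hε.le) hε.le
  have hρlin : ∀ x : ℝ, 0 ≤ x → ρ x ≤ ρ ε + (ρ ε / ε) * x := by
    intro x hx
    rcases le_total x ε with h | h
    · have h1 : ρ x ≤ ρ ε := hρm (Set.mem_Ici.2 hx) (Set.mem_Ici.2 hε.le) h
      have h2 : 0 ≤ (ρ ε / ε) * x := mul_nonneg (div_nonneg hρε0 hε.le) hx
      linarith
    · have hxpos : 0 < x := lt_of_lt_of_le hε h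
      have hcc : (ε/x) • ρ x + (1 - ε/x) • ρ 0 ≤ ρ ((ε/x) • x + (1 - ε/x) • (0:ℝ)) :=
        hρc.2 (Set.mem_Ici.2 hx) (Set.mem_Ici.2 (le_refl (0:ℝ)))
          (div_nonneg hε.le hxpos.le)
          (by rw [sub_nonneg]; exact (div_le_one hxpos).2 h) (by ring)
      simp only [smul_eq_mul, hρ0, mul_zero, add_zero] at hcc
      rw [div_mul_cancel₀ _ (ne_of_gt hxpos)] at hcc
      have key : ρ x ≤ (ρ ε / ε) * x := by
        have h2 := mul_le_mul_of_nonneg_left hcc (div_nonneg hxpos.le hε.le)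
        have h3 : x / ε * (ε / x * ρ x) = ρ x := by field_simp
        have h4 : x / ε * ρ ε = ρ ε / ε * x := by ring
        rw [h3, h4] at h2
        exact h2
      linarith
  -- the per-measure estimate
  have hest : ∀ P ∈ PP, |(∫ ω, g (Γ ω) ∂P) - ∫ ω, g ω ∂P| ≤ ρ M := by
    intro P hP
    haveI := hprob P hP
    have hgint : Integrable g P := by
      refine Integrable.mono' (integrable_const Cg) hgcont.aestronglyMeasurable
        (ae_of_all _ fun ω => ?_)
      simpa [Real.norm_eq_abs] using hgb ω
    have hgΓint : Integrable (fun ω => g (Γ ω)) P := by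
      refine Integrable.mono' (integrable_const Cg)
        (hgcont.comp hΓcont).aestronglyMeasurable (ae_of_all _ fun ω => ?_)
      simpa [Real.norm_eq_abs] using hgb (Γ ω)
    have hρWmeas : AEStronglyMeasurable (fun ω => ρ (W ω)) P := by
      have hcont2 : Continuous (fun x : ℝ => ρ (max x 0)) :=
        hρcont.comp_continuous (continuous_id.max continuous_const)
          (fun x => Set.mem_Ici.2 (le_max_right _ _))
      refine (hcont2.comp_aestronglyMeasurable (hWint P hP).1).congr
        (ae_of_all _ fun ω => ?_)
      simp [Function.comp, max_eq_left (hW0 ω)]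
    have hρW0 : ∀ ω : C(Set.Icc (0:ℝ) T, EuclideanSpace ℝ (Fin d)), 0 ≤ ρ (W ω) := fun ω => by
      rw [← hρ0]
      exact hρm (Set.mem_Ici.2 le_rfl) (Set.mem_Ici.2 (hW0 ω)) (hW0 ω)
    have hρWint : Integrable (fun ω => ρ (W ω)) P := by
      refine Integrable.mono'
        ((integrable_const (ρ ε)).add ((hWint P hP).const_mul (ρ ε / ε))) hρWmeas
        (ae_of_all _ fun ω => ?_)
      rw [Real.norm_eq_abs, abs_of_nonneg (hρW0 ω)]
      exact hρlin _ (hW0 ω)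
    have h1 : |(∫ ω, g (Γ ω) ∂P) - ∫ ω, g ω ∂P| ≤ ∫ ω, ρ (W ω) ∂P := by
      rw [← integral_sub hgΓint hgint]
      calc |∫ ω, (g (Γ ω) - g ω) ∂P| ≤ ∫ ω, |g (Γ ω) - g ω| ∂P := by
            simpa [Real.norm_eq_abs] using
              norm_integral_le_integral_norm (μ := P) (fun ω => g (Γ ω) - g ω)
        _ ≤ ∫ ω, ρ (W ω) ∂P := by
            refine integral_mono (hgΓint.sub hgint).abs hρWint fun ω => ?_
            calc |g (Γ ω) - g ω| ≤ ρ ‖Γ ω - ω‖ := hmod _ _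
              _ ≤ ρ (W ω) :=
                hρm (Set.mem_Ici.2 (norm_nonneg _)) (Set.mem_Ici.2 (hW0 ω)) (hΓW ω)
    have h2 : ∫ ω, ρ (W ω) ∂P ≤ ρ (∫ ω, W ω ∂P) :=
      hρc.le_map_integral hρcont isClosed_Ici
        (ae_of_all _ fun ω => Set.mem_Ici.2 (hW0 ω)) (hWint P hP) hρWint
    have h3 : ρ (∫ ω, W ω ∂P) ≤ ρ M :=
      hρm (Set.mem_Ici.2 (integral_nonneg fun ω => hW0 ω)) (Set.mem_Ici.2 hM0) (hMle P hP)
    linarith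
  -- uniform bounds on the integrals
  have hintbd : ∀ (P : Measure C(Set.Icc (0:ℝ) T, EuclideanSpace ℝ (Fin d))), P ∈ PP → ∀ f : C(Set.Icc (0:ℝ) T, EuclideanSpace ℝ (Fin d)) → ℝ, (∀ ω, |f ω| ≤ Cg) →
      ∫ ω, f ω ∂P ≤ max |Cg| 0 := by
    intro P hP f hf
    haveI := hprob P hP
    have hb := norm_integral_le_of_norm_le_const (μ := P) (f := f) (C := Cg)
      (ae_of_all _ fun ω => by simpa [Real.norm_eq_abs] using hf ω)
    rw [Real.norm_eq_abs, probReal_univ, mul_one] at hb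
    calc ∫ ω, f ω ∂P ≤ |∫ ω, f ω ∂P| := le_abs_self _
      _ ≤ Cg := hb
      _ ≤ |Cg| := le_abs_self _
      _ ≤ max |Cg| 0 := le_max_left _ _
  -- conclude by comparing the suprema
  refine sup_comparison (fun P => ⨆ _ : P ∈ PP, ∫ ω, g (Γ ω) ∂P)
    (fun P => ⨆ _ : P ∈ PP, ∫ ω, g ω ∂P) (ρ M) (max |Cg| 0) ?_ ?_ ?_
  · intro P
    by_cases hP : P ∈ PP
    · rw [ciSup_pos hP]
      exact hintbd P hP _ fun ω => hgb (Γ ω)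
    · haveI : IsEmpty (P ∈ PP) := ⟨hP⟩
      rw [Real.iSup_of_isEmpty]
      exact le_max_right _ _
  · intro P
    by_cases hP : P ∈ PP
    · rw [ciSup_pos hP]
      exact hintbd P hP _ hgb
    · haveI : IsEmpty (P ∈ PP) := ⟨hP⟩
      rw [Real.iSup_of_isEmpty]
      exact le_max_right _ _
  · intro P
    by_cases hP : P ∈ PP
    · rw [ciSup_pos hP, ciSup_pos hP]
      exact hest P hP
    · haveI : IsEmpty (P ∈ PP) := ⟨hP⟩
      rw [Real.iSup_of_isEmpty, Real.iSup_of_isEmpty]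
      simpa using hρM0
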